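/- In the 3-SAT reduction graph with all M_s = 1, the 3-SAT instance is satisfiable if and only if max_{π∈G} R̃(π) > m + n + 1, where R̃(π) = len(π) + Σ_s Σ_{v∈ivs(π,s)} c(v). -/

import Mathlib

open MeasureTheory

namespace TypedSched

/-- A typed DAG task: directed edges `E`, type function `γ`, WCET function `c`,
and designated source and sink vertices. -/
structure TypedDAG (V S : Type) where
  E : V → V → Prop
  γ : V → S
  c : V → ℝ
  src : V
  snk : V

variable {V S : Type}

/-- Strict ancestors of `v`. -/
def anc (G : TypedDAG V S) (v : V) : Set V := {u | Relation.TransGen G.E u v}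

/-- Strict descendants of `v`. -/
def des (G : TypedDAG V S) (v : V) : Set V := {u | Relation.TransGen G.E v u}

/-- `par v`: vertices of the same type as `v` that are neither ancestors nor
descendants of `v` (and distinct from `v`). -/
def par (G : TypedDAG V S) (v : V) : Set V :=
  {u | u ≠ v ∧ G.γ u = G.γ v ∧ u ∉ anc G v ∧ u ∉ des G v}

def Acyclic (G : TypedDAG V S) : Prop := ∀ v, ¬ Relation.TransGen G.E v v

def WeightsNonneg (G : TypedDAG V S) : Prop := ∀ v, 0 ≤ G.c v

def IsPath (G : TypedDAG V S) (π : List V) : Prop := π ≠ [] ∧ π.Chain' G.E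

/-- A complete path goes from the source to the sink. -/
def IsCompletePath (G : TypedDAG V S) (π : List V) : Prop :=
  IsPath G π ∧ π.head? = some G.src ∧ π.getLast? = some G.snk

/-- Length of a path: total WCET of its vertices. -/
def len (G : TypedDAG V S) (π : List V) : ℝ := (π.map G.c).sum

/-- `len(G)`: length of the longest complete path. -/
noncomputable def lenG (G : TypedDAG V S) : ℝ :=
  sSup {x : ℝ | ∃ π : List V, IsCompletePath G π ∧ x = len G π}

/-- The scaled graph `Ĝ` with `ĉ(v) = c(v)·(1 − 1/M_{γ(v)})`. -/
noncomputable def scaled (G : TypedDAG V S) (M : S → ℕ) : TypedDAG V S :=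
  { G with c := fun v => G.c v * (1 - 1 / (M (G.γ v) : ℝ)) }

/-- `vol_s(G)`: total WCET of type-`s` vertices. -/
noncomputable def vol (G : TypedDAG V S) (s : S) : ℝ := ∑ᶠ v ∈ {v : V | G.γ v = s}, G.c v

/-- `ivs(π, s)`: interference set of the path `π` for type `s`. -/
def ivs (G : TypedDAG V S) (π : List V) (s : S) : Set V :=
  ⋃ τ ∈ {τ : V | τ ∈ π ∧ G.γ τ = s}, par G τ

/-- Sum of WCETs of type-`s` vertices on a path. -/
def pathTypeSum [DecidableEq S] (G : TypedDAG V S) (π : List V) (s : S) : ℝ :=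
  ((π.filter (fun v => decide (G.γ v = s))).map G.c).sum

/-- The NEW-B-1 bound. -/
noncomputable def newB1 [Fintype S] (G : TypedDAG V S) (M : S → ℕ) : ℝ :=
  lenG (scaled G M) + ∑ s : S, vol G s / (M s : ℝ)

/-- The OLD-B bound. -/
noncomputable def oldB [Fintype S] (G : TypedDAG V S) (M : S → ℕ) : ℝ :=
  (1 - 1 / ((Finset.univ.sup M : ℕ) : ℝ)) * lenG G + ∑ s : S, vol G s / (M s : ℝ)

/-- Per-path bound `R̃(π)` used by NEW-B-2. -/
noncomputable def Rtilde [Fintype S] (G : TypedDAG V S) (M : S → ℕ) (π : List V) : ℝ :=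
  len G π + ∑ s : S, (∑ᶠ v ∈ ivs G π s, G.c v) / (M s : ℝ)

/-- The NEW-B-2 bound. -/
noncomputable def newB2 [Fintype S] (G : TypedDAG V S) (M : S → ℕ) : ℝ :=
  sSup {x : ℝ | ∃ π : List V, IsCompletePath G π ∧ x = Rtilde G M π}

/-- An execution sequence of `G` under a work-conserving scheduler on a platform
with `M s` cores of each type `s`.  `exec v` is the set of time instants at which
`v` executes, and `f v` is its finish time. -/
structure ExecSeq (G : TypedDAG V S) (M : S → ℕ) where
  exec : V → Set ℝ
  f : V → ℝ
  meas : ∀ v, MeasurableSet (exec v)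
  /-- each vertex executes for at most its WCET -/
  dur_le : ∀ v, (volume (exec v)).toReal ≤ G.c v
  exec_nonneg : ∀ v, exec v ⊆ Set.Ici 0
  exec_lt_finish : ∀ v, exec v ⊆ Set.Iio (f v)
  f_nonneg : ∀ v, 0 ≤ f v
  /-- precedence: a vertex may execute only after all its predecessors finished -/
  prec : ∀ u v, G.E u v → exec v ⊆ Set.Ici (f u)
  /-- at any instant at most `M s` vertices of type `s` are executing -/
  cores : ∀ (s : S) (t : ℝ), {v : V | G.γ v = s ∧ t ∈ exec v}.ncard ≤ M s
  /-- work conservation: if an eligible unfinished vertex does not execute at `t`,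
  all cores of its type are busy -/
  work_conserving : ∀ (v : V) (t : ℝ), 0 ≤ t → t < f v →
    (∀ u, G.E u v → f u ≤ t) → t ∉ exec v →
    {u : V | G.γ u = G.γ v ∧ t ∈ exec u}.ncard = M (G.γ v)

/-- A critical path: a complete path on which each vertex is a
latest-finishing predecessor of the next one. -/
def IsCriticalPath (G : TypedDAG V S) {M : S → ℕ} (ex : ExecSeq G M) (π : List V) : Prop :=
  IsCompletePath G π ∧
  ∀ p ∈ π.zip π.tail, ∀ w, G.E w p.2 → ex.f w ≤ ex.f p.1

/-- `X_s`: total time during which type-`s` critical-path vertices execute inside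
their windows (the window of `τ_i` is `[f(τ_{i-1}), f(τ_i))`, with `f(τ_0) = 0`). -/
noncomputable def Xs [DecidableEq S] (G : TypedDAG V S) {M : S → ℕ} (ex : ExecSeq G M)
    (π : List V) (s : S) : ℝ :=
  ((π.zip ((0:ℝ) :: π.map ex.f)).map fun p =>
    if G.γ p.1 = s then (volume (ex.exec p.1 ∩ Set.Ico p.2 (ex.f p.1))).toReal else 0).sum

/-- `Y_s`: total time during which type-`s` critical-path vertices are not executing
inside their windows. -/
noncomputable def Ys [DecidableEq S] (G : TypedDAG V S) {M : S → ℕ} (ex : ExecSeq G M)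
    (π : List V) (s : S) : ℝ :=
  ((π.zip ((0:ℝ) :: π.map ex.f)).map fun p =>
    if G.γ p.1 = s then (volume ((Set.Ico p.2 (ex.f p.1)) \ ex.exec p.1)).toReal else 0).sum

/-! ### The 3-SAT reduction graph -/

/-- Vertices of the reduction graph: backbone vertices `v_0,…,v_n`, clause
vertices `u_r`, and literal-occurrence vertices (clause `r`, position `j`). -/
abbrev RV (n m : ℕ) := Fin (n+1) ⊕ (Fin m ⊕ (Fin m × Fin 3))

/-- A 3-SAT instance: `m` clauses over `n` variables, each clause being three
literals (a variable together with a polarity). -/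
def Sat3 (n m : ℕ) (Cl : Fin m → Fin 3 → Fin n × Bool) : Prop :=
  ∃ a : Fin n → Bool, ∀ r : Fin m, ∃ j : Fin 3, (Cl r j).2 = a (Cl r j).1

/-- Linear key used to order literal occurrences. -/
def key {m : ℕ} (p : Fin m × Fin 3) : ℕ := 3 * p.1.1 + p.2.1

/-- `p` is an occurrence of the literal `(i, b)`. -/
def isOcc {n m : ℕ} (Cl : Fin m → Fin 3 → Fin n × Bool) (i : Fin n) (b : Bool)
    (p : Fin m × Fin 3) : Prop := Cl p.1 p.2 = (i, b)

def noOcc {n m : ℕ} (Cl : Fin m → Fin 3 → Fin n × Bool) (i : Fin n) (b : Bool) : Prop :=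
  ∀ p, ¬ isOcc Cl i b p

def firstOcc {n m : ℕ} (Cl : Fin m → Fin 3 → Fin n × Bool) (i : Fin n) (b : Bool)
    (p : Fin m × Fin 3) : Prop :=
  isOcc Cl i b p ∧ ∀ q, isOcc Cl i b q → key p ≤ key q

def lastOcc {n m : ℕ} (Cl : Fin m → Fin 3 → Fin n × Bool) (i : Fin n) (b : Bool)
    (p : Fin m × Fin 3) : Prop :=
  isOcc Cl i b p ∧ ∀ q, isOcc Cl i b q → key q ≤ key p

def nextOcc {n m : ℕ} (Cl : Fin m → Fin 3 → Fin n × Bool) (i : Fin n) (b : Bool)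
    (p q : Fin m × Fin 3) : Prop :=
  isOcc Cl i b p ∧ isOcc Cl i b q ∧ key p < key q ∧
    ∀ r, isOcc Cl i b r → key r ≤ key p ∨ key q ≤ key r

/-- Edges of the reduction graph: clause vertices hang between `v_0` and `v_n`;
between `v_{i-1}` and `v_i` run the positive and the negative path, chaining the
occurrences of literal `x_i` resp. `x̄_i` (a direct edge if a literal has no
occurrence). -/
def redE {n m : ℕ} (Cl : Fin m → Fin 3 → Fin n × Bool) : RV n m → RV n m → Prop
  | Sum.inl a, Sum.inl b =>
      ∃ i : Fin n, a = i.castSucc ∧ b = i.succ ∧ (noOcc Cl i true ∨ noOcc Cl i false)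
  | Sum.inl a, Sum.inr (Sum.inl _) => a = 0
  | Sum.inr (Sum.inl _), Sum.inl b => b = Fin.last n
  | Sum.inl a, Sum.inr (Sum.inr p) =>
      ∃ (i : Fin n) (b' : Bool), a = i.castSucc ∧ firstOcc Cl i b' p
  | Sum.inr (Sum.inr p), Sum.inl b =>
      ∃ (i : Fin n) (b' : Bool), b = i.succ ∧ lastOcc Cl i b' p
  | Sum.inr (Sum.inr p), Sum.inr (Sum.inr q) =>
      ∃ (i : Fin n) (b' : Bool), nextOcc Cl i b' p q
  | _, _ => False

/-- Types: backbone vertices have type `s_0`; the clause vertex `u_r` and the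
literal vertices of clause `r` have type `s_r` (index `r+1`). -/
def redγ (n m : ℕ) : RV n m → Fin (m+1)
  | Sum.inl _ => 0
  | Sum.inr (Sum.inl r) => r.succ
  | Sum.inr (Sum.inr p) => p.1.succ

/-- Weights: backbone and clause vertices have WCET 1; literal vertices have
WCET `1/(mn+1)`. -/
noncomputable def redc (n m : ℕ) : RV n m → ℝ
  | Sum.inl _ => 1
  | Sum.inr (Sum.inl _) => 1
  | Sum.inr (Sum.inr _) => 1 / ((m : ℝ) * n + 1)

/-- The typed DAG constructed from a 3-SAT instance. -/
noncomputable def redGraph {n m : ℕ} (Cl : Fin m → Fin 3 → Fin n × Bool) :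
    TypedDAG (RV n m) (Fin (m+1)) :=
  { E := redE Cl
    γ := redγ n m
    c := redc n m
    src := Sum.inl 0
    snk := Sum.inl (Fin.last n) }


section Reduction

variable {n m : ℕ} (Cl : Fin m → Fin 3 → Fin n × Bool)

/-- Rank function certifying acyclicity. -/
def rk : RV n m → ℕ
  | Sum.inl i => (i : ℕ) * (3*m+2)
  | Sum.inr (Sum.inl _) => 1
  | Sum.inr (Sum.inr p) => ((Cl p.1 p.2).1 : ℕ) * (3*m+2) + 1 + key p

lemma key_lt_3m (p : Fin m × Fin 3) : key p < 3*m := by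
  have h1 := p.1.2; have h2 := p.2.2; simp only [key]; omega

lemma isOcc_var {i : Fin n} {b : Bool} {p : Fin m × Fin 3} (h : isOcc Cl i b p) :
    (Cl p.1 p.2).1 = i := by rw [h]

lemma rk_lt (hn : 1 ≤ n) {u v : RV n m} (h : redE Cl u v) : rk Cl u < rk Cl v := by
  rcases u with a | r | p <;> rcases v with b | r' | q <;> simp only [redE] at h
  · obtain ⟨i, rfl, rfl, -⟩ := h
    simp only [rk, Fin.coe_castSucc, Fin.val_succ]
    have : 0 < 3*m+2 := by omega
    nlinarith
  · subst h; simp [rk]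
  · obtain ⟨i, b', rfl, hf⟩ := h
    have := isOcc_var Cl hf.1
    simp only [rk, Fin.coe_castSucc, this]
    omega
  · subst h
    simp only [rk, Fin.val_last]
    nlinarith
  · obtain ⟨i, b', rfl, hl⟩ := h
    have hv := isOcc_var Cl hl.1
    have hk := key_lt_3m p
    simp only [rk, hv, Fin.val_succ]
    nlinarith
  · obtain ⟨i, b', hno⟩ := h
    have hp := isOcc_var Cl hno.1
    have hq := isOcc_var Cl hno.2.1
    have hk := hno.2.2.1
    simp only [rk, hp, hq]
    omega

lemma reach_rk (hn : 1 ≤ n) {u v : RV n m} (h : Relation.TransGen (redE Cl) u v) :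
    rk Cl u < rk Cl v := by
  induction h with
  | single h => exact rk_lt Cl hn h
  | tail _ h ih => exact lt_trans ih (rk_lt Cl hn h)

lemma no_into_v0 (hn : 1 ≤ n) {x : RV n m} : ¬ redE Cl x (Sum.inl 0) := by
  rcases x with a | r | p <;> simp only [redE] <;> intro h
  · obtain ⟨i, -, hi, -⟩ := h
    exact (Fin.succ_ne_zero i) hi.symm
  · have : (Fin.last n : Fin (n+1)).1 = (0 : Fin (n+1)).1 := by rw [h]
    simp [Fin.val_last] at this; omega
  · obtain ⟨i, b', hi, -⟩ := h
    exact (Fin.succ_ne_zero i) hi.symm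

lemma no_from_vn (hn : 1 ≤ n) {x : RV n m} : ¬ redE Cl (Sum.inl (Fin.last n)) x := by
  rcases x with a | r | p <;> simp only [redE] <;> intro h
  · obtain ⟨i, hi, -⟩ := h
    have : (Fin.last n : Fin (n+1)).1 = (i.castSucc).1 := by rw [hi]
    simp [Fin.val_last] at this; have := i.2; omega
  · have : (Fin.last n : Fin (n+1)).1 = (0 : Fin (n+1)).1 := by rw [h]
    simp [Fin.val_last] at this; omega
  · obtain ⟨i, b', hi, -⟩ := h
    have : (Fin.last n : Fin (n+1)).1 = (i.castSucc).1 := by rw [hi]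
    simp [Fin.val_last] at this; have := i.2; omega

lemma into_clause {x : RV n m} {r : Fin m} (h : redE Cl x (Sum.inr (Sum.inl r))) :
    x = Sum.inl 0 := by
  rcases x with a | r' | p <;> simp only [redE] at h
  · rw [h]

lemma from_clause {x : RV n m} {r : Fin m} (h : redE Cl (Sum.inr (Sum.inl r)) x) :
    x = Sum.inl (Fin.last n) := by
  rcases x with a | r' | p <;> simp only [redE] at h
  · rw [h]

lemma refl_reach_v0 (hn : 1 ≤ n) {x : RV n m}
    (h : Relation.ReflTransGen (redE Cl) x (Sum.inl 0)) : x = Sum.inl 0 := by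
  rcases h.cases_tail with h | ⟨c, _, hc⟩
  · exact h.symm
  · exact absurd hc (no_into_v0 Cl hn)

lemma refl_reach_vn (hn : 1 ≤ n) {x : RV n m}
    (h : Relation.ReflTransGen (redE Cl) (Sum.inl (Fin.last n)) x) :
    x = Sum.inl (Fin.last n) := by
  rcases h.cases_head with h | ⟨c, hc, _⟩
  · exact h.symm
  · exact absurd hc (no_from_vn Cl hn)

lemma reach_clause (hn : 1 ≤ n) {x : RV n m} {r : Fin m}
    (h : Relation.TransGen (redE Cl) x (Sum.inr (Sum.inl r))) : x = Sum.inl 0 := by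
  obtain ⟨b, hb, he⟩ := Relation.TransGen.tail'_iff.1 h
  rw [into_clause Cl he] at hb
  exact refl_reach_v0 Cl hn hb

lemma clause_reach (hn : 1 ≤ n) {x : RV n m} {r : Fin m}
    (h : Relation.TransGen (redE Cl) (Sum.inr (Sum.inl r)) x) :
    x = Sum.inl (Fin.last n) := by
  obtain ⟨b, he, hb⟩ := Relation.TransGen.head'_iff.1 h
  rw [from_clause Cl he] at hb
  exact refl_reach_vn Cl hn hb

lemma occ_to_next (hn : 1 ≤ n) (i : Fin n) (b : Bool) :
    ∀ (N : ℕ) (p : Fin m × Fin 3), 3*m - key p ≤ N → isOcc Cl i b p →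
    Relation.TransGen (redE Cl) (Sum.inr (Sum.inr p)) (Sum.inl i.succ) := by
  intro N
  induction N with
  | zero => intro p hN hp; have := key_lt_3m p; omega
  | succ N ih =>
    intro p hN hp
    by_cases hl : ∀ q, isOcc Cl i b q → key q ≤ key p
    · exact Relation.TransGen.single
        (show redE Cl (Sum.inr (Sum.inr p)) (Sum.inl i.succ) from ⟨i, b, rfl, hp, hl⟩)
    · push_neg at hl
      obtain ⟨q, hq, hqk⟩ := hl
      have hne : {k | ∃ q', isOcc Cl i b q' ∧ key p < key q' ∧ key q' = k}.Nonempty :=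
        ⟨key q, q, hq, hqk, rfl⟩
      obtain ⟨q0, hq0occ, hq0gt, hq0eq⟩ := Nat.sInf_mem hne
      have hmin : ∀ r', isOcc Cl i b r' → key r' ≤ key p ∨ key q0 ≤ key r' := by
        intro r' hr'
        by_cases h' : key r' ≤ key p
        · exact Or.inl h'
        · right; rw [hq0eq]; exact Nat.sInf_le ⟨r', hr', by omega, rfl⟩
      exact Relation.TransGen.head (b := Sum.inr (Sum.inr q0))
        ⟨i, b, hp, hq0occ, hq0gt, hmin⟩ (ih q0 (by omega) hq0occ)

lemma start_to_occ (hn : 1 ≤ n) (i : Fin n) (b : Bool) :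
    ∀ (N : ℕ) (p : Fin m × Fin 3), key p ≤ N → isOcc Cl i b p →
    Relation.TransGen (redE Cl) (Sum.inl i.castSucc) (Sum.inr (Sum.inr p)) := by
  intro N
  induction N with
  | zero =>
    intro p hN hp
    have hf : ∀ q, isOcc Cl i b q → key p ≤ key q := fun q _ => by omega
    refine Relation.TransGen.single ?_
    exact ⟨i, b, rfl, hp, hf⟩
  | succ N ih =>
    intro p hN hp
    by_cases hf : ∀ q, isOcc Cl i b q → key p ≤ key q
    · refine Relation.TransGen.single ?_
      exact ⟨i, b, rfl, hp, hf⟩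
    · push_neg at hf
      obtain ⟨q, hq, hqk⟩ := hf
      classical
      obtain ⟨q1, hq1mem, hq1max⟩ := Finset.exists_max_image
        (Finset.univ.filter (fun q' => isOcc Cl i b q' ∧ key q' < key p)) key
        ⟨q, by simp [hq, hqk]⟩
      simp only [Finset.mem_filter, Finset.mem_univ, true_and] at hq1mem
      obtain ⟨hq1occ, hq1lt⟩ := hq1mem
      have hmin : ∀ r', isOcc Cl i b r' → key r' ≤ key q1 ∨ key p ≤ key r' := by
        intro r' hr'
        by_cases h' : key r' < key p
        · exact Or.inl (hq1max r' (by simp [hr', h']))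
        · right; omega
      exact Relation.TransGen.tail (ih q1 (by omega) hq1occ)
        ⟨i, b, hq1occ, hp, hq1lt, hmin⟩

lemma backbone_step (hn : 1 ≤ n) (i : Fin n) :
    Relation.TransGen (redE Cl) (Sum.inl i.castSucc) (Sum.inl i.succ) := by
  by_cases h : noOcc Cl i true ∨ noOcc Cl i false
  · refine Relation.TransGen.single ?_
    exact ⟨i, rfl, rfl, h⟩
  · push_neg at h
    have h1 : ¬ ∀ p, ¬ isOcc Cl i true p := h.1
    obtain ⟨p, hp⟩ := not_forall_not.1 h1
    exact (start_to_occ Cl hn i true (key p) p le_rfl hp).trans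
      (occ_to_next Cl hn i true (3*m) p (by omega) hp)

lemma backbone_reach_aux (hn : 1 ≤ n) :
    ∀ (d : ℕ) (a b : Fin (n+1)), (b : ℕ) = (a : ℕ) + d + 1 →
    Relation.TransGen (redE Cl) (Sum.inl a) (Sum.inl b) := by
  intro d
  induction d with
  | zero =>
    intro a b hb
    have ha : (a : ℕ) < n := by have := b.2; omega
    have h1 : (⟨(a:ℕ), ha⟩ : Fin n).castSucc = a := by
      apply Fin.ext; simp
    have h2 : (⟨(a:ℕ), ha⟩ : Fin n).succ = b := by
      apply Fin.ext; simp [Fin.val_succ]; omega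
    have := backbone_step Cl hn ⟨(a:ℕ), ha⟩
    rwa [h1, h2] at this
  | succ d ih =>
    intro a b hb
    have ha : (a : ℕ) < n := by have := b.2; omega
    have h1 : (⟨(a:ℕ), ha⟩ : Fin n).castSucc = a := by
      apply Fin.ext; simp
    have hstep := backbone_step Cl hn ⟨(a:ℕ), ha⟩
    rw [h1] at hstep
    exact hstep.trans (ih (⟨(a:ℕ), ha⟩ : Fin n).succ b (by simp [Fin.val_succ]; omega))

lemma backbone_reach (hn : 1 ≤ n) {a b : Fin (n+1)} (h : (a : ℕ) < (b : ℕ)) :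
    Relation.TransGen (redE Cl) (Sum.inl a) (Sum.inl b) :=
  backbone_reach_aux Cl hn ((b : ℕ) - (a : ℕ) - 1) a b (by omega)

lemma occ_reach_occ (hn : 1 ≤ n) {p q : Fin m × Fin 3}
    (hlt : ((Cl p.1 p.2).1 : ℕ) < ((Cl q.1 q.2).1 : ℕ)) :
    Relation.TransGen (redE Cl) (Sum.inr (Sum.inr p)) (Sum.inr (Sum.inr q)) := by
  have hp : isOcc Cl (Cl p.1 p.2).1 (Cl p.1 p.2).2 p := rfl
  have hq : isOcc Cl (Cl q.1 q.2).1 (Cl q.1 q.2).2 q := rfl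
  have h1 := occ_to_next Cl hn _ _ (3*m) p (by omega) hp
  have h2 := start_to_occ Cl hn _ _ (key q) q le_rfl hq
  rcases eq_or_lt_of_le (show ((Cl p.1 p.2).1 : ℕ) + 1 ≤ ((Cl q.1 q.2).1 : ℕ) from hlt)
    with he | hlt'
  · have : (Cl p.1 p.2).1.succ = (Cl q.1 q.2).1.castSucc := by
      apply Fin.ext; simp [Fin.val_succ, Fin.coe_castSucc]; omega
    rw [this] at h1
    exact h1.trans h2
  · have hmid := backbone_reach Cl hn (a := (Cl p.1 p.2).1.succ)
      (b := (Cl q.1 q.2).1.castSucc) (by simp [Fin.val_succ, Fin.coe_castSucc]; omega)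
    exact (h1.trans hmid).trans h2

lemma redγ_eq_zero {x : RV n m} (h : redγ n m x = 0) : ∃ j, x = Sum.inl j := by
  rcases x with j | r | p
  · exact ⟨j, rfl⟩
  · exact absurd h (Fin.succ_ne_zero r)
  · exact absurd h (Fin.succ_ne_zero p.1)

lemma par_backbone (hn : 1 ≤ n) (i : Fin (n+1)) :
    par (redGraph Cl) (Sum.inl i) = ∅ := by
  ext u
  simp only [Set.mem_empty_iff_false, iff_false]
  rintro ⟨hne, hγ, hanc, hdes⟩
  obtain ⟨j, rfl⟩ := redγ_eq_zero (x := u) hγ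
  have hij : (j : ℕ) ≠ (i : ℕ) := by
    simp only [ne_eq, Sum.inl.injEq] at hne
    simpa [Fin.ext_iff] using hne
  rcases hij.lt_or_gt with h | h
  · exact hanc (backbone_reach Cl hn h)
  · exact hdes (backbone_reach Cl hn h)

lemma clause_mem_par_lit (hn : 1 ≤ n) (p : Fin m × Fin 3) :
    (Sum.inr (Sum.inl p.1) : RV n m) ∈ par (redGraph Cl) (Sum.inr (Sum.inr p)) := by
  refine ⟨by simp, rfl, ?_, ?_⟩
  · intro h
    have := clause_reach Cl hn (x := Sum.inr (Sum.inr p)) h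
    simp at this
  · intro h
    have := reach_clause Cl hn (x := Sum.inr (Sum.inr p)) h
    simp at this

lemma lit_par (hn : 1 ≤ n)
    (hdist : ∀ (r : Fin m) (j j' : Fin 3), j ≠ j' → (Cl r j).1 ≠ (Cl r j').1)
    (p : Fin m × Fin 3) :
    par (redGraph Cl) (Sum.inr (Sum.inr p)) = {Sum.inr (Sum.inl p.1)} := by
  refine Set.Subset.antisymm ?_ (Set.singleton_subset_iff.2 (clause_mem_par_lit Cl hn p))
  rintro u ⟨hne, hγ, hanc, hdes⟩
  rcases u with j | r | q
  · exact absurd hγ (Fin.succ_ne_zero p.1).symm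
  · have : r = p.1 := Fin.succ_inj.1 hγ
    simp [this]
  · exfalso
    have hq1 : q.1 = p.1 := Fin.succ_inj.1 hγ
    have hqp : q ≠ p := fun h => hne (by rw [h])
    have hj : q.2 ≠ p.2 := fun h => hqp (Prod.ext hq1 h)
    have hvar : (Cl p.1 q.2).1 ≠ (Cl p.1 p.2).1 := hdist p.1 q.2 p.2 hj
    have hvals : ((Cl q.1 q.2).1 : ℕ) ≠ ((Cl p.1 p.2).1 : ℕ) := by
      rw [hq1]; simpa [Fin.ext_iff] using hvar
    rcases hvals.lt_or_gt with h | h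
    · exact hanc (occ_reach_occ Cl hn h)
    · exact hdes (occ_reach_occ Cl hn h)

lemma clause_par_sub (r : Fin m) :
    par (redGraph Cl) (Sum.inr (Sum.inl r)) ⊆
      Set.range (fun j : Fin 3 => (Sum.inr (Sum.inr (r, j)) : RV n m)) := by
  rintro u ⟨hne, hγ, -, -⟩
  rcases u with j | r' | q
  · exact absurd hγ (Fin.succ_ne_zero r).symm
  · have : r' = r := Fin.succ_inj.1 hγ
    exact absurd (by rw [this]) hne
  · have hq1 : q.1 = r := Fin.succ_inj.1 hγ
    exact ⟨q.2, by rw [← hq1]⟩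

lemma chain_pairwise (hn : 1 ≤ n) {π : List (RV n m)} (h : π.Chain' (redE Cl)) :
    π.Pairwise (Relation.TransGen (redE Cl)) := by
  haveI : IsTrans (RV n m) (Relation.TransGen (redE Cl)) :=
    ⟨fun _ _ _ h1 h2 => h1.trans h2⟩
  have h1 : π.Chain' (Relation.TransGen (redE Cl)) :=
    h.imp (fun _ _ hab => Relation.TransGen.single hab)
  exact List.isChain_iff_pairwise.1 h1

lemma chain_nodup (hn : 1 ≤ n) {π : List (RV n m)} (h : π.Chain' (redE Cl)) :
    π.Nodup := by
  refine (chain_pairwise Cl hn h).imp ?_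
  intro a b hab he
  rw [he] at hab
  exact absurd (reach_rk Cl hn hab) (lt_irrefl _)

lemma three_le_n (hm : 1 ≤ m)
    (hdist : ∀ (r : Fin m) (j j' : Fin 3), j ≠ j' → (Cl r j).1 ≠ (Cl r j').1) :
    3 ≤ n := by
  set r0 : Fin m := ⟨0, hm⟩
  have h01 := hdist r0 0 1 (by decide)
  have h02 := hdist r0 0 2 (by decide)
  have h12 := hdist r0 1 2 (by decide)
  have hcard : ({(Cl r0 0).1, (Cl r0 1).1, (Cl r0 2).1} : Finset (Fin n)).card = 3 := by
    rw [Finset.card_insert_of_notMem (by simp [h01, h02]),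
      Finset.card_insert_of_notMem (by simp [h12]), Finset.card_singleton]
  have hle := Finset.card_le_univ ({(Cl r0 0).1, (Cl r0 1).1, (Cl r0 2).1} : Finset (Fin n))
  rw [hcard] at hle
  simpa using hle

lemma finsum_mem_le_of_subset {α : Type*} [Fintype α] {S T : Set α} (h : S ⊆ T)
    (f : α → ℝ) (hf : ∀ a, 0 ≤ f a) : (∑ᶠ v ∈ S, f v) ≤ ∑ᶠ v ∈ T, f v := by
  classical
  rw [finsum_mem_eq_finite_toFinset_sum f S.toFinite,
    finsum_mem_eq_finite_toFinset_sum f T.toFinite]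
  apply Finset.sum_le_sum_of_subset_of_nonneg
  · intro x hx
    simp only [Set.Finite.mem_toFinset] at hx ⊢
    exact h hx
  · intro i _ _
    exact hf i

lemma mem_of_getLast?' {α : Type*} {l : List α} {a : α} (h : l.getLast? = some a) :
    a ∈ l := by
  have hne : l ≠ [] := by rintro rfl; simp at h
  have hmem := List.getLast_mem hne
  rw [List.getLast?_eq_getLast hne, Option.some_inj] at h
  rw [← h]; exact hmem

lemma ivs_zero (hn : 1 ≤ n) (π : List (RV n m)) : ivs (redGraph Cl) π 0 = ∅ := by
  apply Set.eq_empty_iff_forall_notMem.2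
  intro x hx
  obtain ⟨τ, hτ, hxp⟩ := Set.mem_iUnion₂.1 hx
  obtain ⟨hτπ, hτγ⟩ := hτ
  obtain ⟨j, rfl⟩ := redγ_eq_zero (x := τ) hτγ
  rw [par_backbone Cl hn j] at hxp
  exact hxp

lemma ivs_succ_sub (hn : 1 ≤ n)
    (hdist : ∀ (r : Fin m) (j j' : Fin 3), j ≠ j' → (Cl r j).1 ≠ (Cl r j').1)
    {π : List (RV n m)} (hno : ∀ r', Sum.inr (Sum.inl r') ∉ π) (r : Fin m) :
    ivs (redGraph Cl) π r.succ ⊆ {Sum.inr (Sum.inl r)} := by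
  intro x hx
  obtain ⟨τ, hτ, hxp⟩ := Set.mem_iUnion₂.1 hx
  obtain ⟨hτπ, hτγ⟩ := hτ
  rcases τ with j | r' | p
  · exact absurd hτγ (Fin.succ_ne_zero r).symm
  · exact absurd hτπ (hno r')
  · have hp1 : p.1 = r := Fin.succ_inj.1 hτγ
    rw [lit_par Cl hn hdist p] at hxp
    rw [hxp, hp1]
    rfl

lemma ivs_succ_mem (hn : 1 ≤ n) {π : List (RV n m)} {p : Fin m × Fin 3}
    (hτ : Sum.inr (Sum.inr p) ∈ π) :
    (Sum.inr (Sum.inl p.1) : RV n m) ∈ ivs (redGraph Cl) π p.1.succ := by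
  exact Set.mem_iUnion₂.2 ⟨Sum.inr (Sum.inr p), ⟨hτ, rfl⟩, clause_mem_par_lit Cl hn p⟩

lemma redc_nonneg (v : RV n m) : 0 ≤ redc n m v := by
  rcases v with j | r | p <;> simp only [redc] <;> positivity

lemma clause_path (hn : 1 ≤ n) {π : List (RV n m)} {r0 : Fin m}
    (hc : IsCompletePath (redGraph Cl) π) (hmem : Sum.inr (Sum.inl r0) ∈ π) :
    π = [Sum.inl 0, Sum.inr (Sum.inl r0), Sum.inl (Fin.last n)] := by
  obtain ⟨⟨hne, hch⟩, hhd, hlast⟩ := hc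
  have hnd : π.Nodup := chain_nodup Cl hn hch
  obtain ⟨l1, l2, rfl⟩ := List.append_of_mem hmem
  have hl1ne : l1 ≠ [] := by
    rintro rfl
    simp only [List.nil_append, List.head?_cons] at hhd
    exact absurd hhd (by simp [redGraph])
  unfold List.Chain' at hch
  rw [List.isChain_append] at hch
  obtain ⟨hch1, hch2, hglue⟩ := hch
  have hedge := hglue (l1.getLast hl1ne) (List.getLast?_eq_getLast hl1ne)
    (Sum.inr (Sum.inl r0)) rfl
  have hl1last : l1.getLast? = some (Sum.inl 0) := by
    rw [List.getLast?_eq_getLast hl1ne, into_clause Cl hedge]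
  have hl1 : l1 = [Sum.inl 0] := by
    obtain ⟨a, t1, rfl⟩ := List.exists_cons_of_ne_nil hl1ne
    have hha : a = Sum.inl 0 := by
      rw [List.head?_append] at hhd
      simp only [List.head?_cons, Option.or_some] at hhd
      simp only [redGraph] at hhd
      exact Option.some_inj.1 hhd
    subst hha
    rcases t1 with - | ⟨c, t2⟩
    · rfl
    · exfalso
      have hmemlast : (Sum.inl 0 : RV n m) ∈ c :: t2 := by
        have h1 : (Sum.inl 0 :: c :: t2).getLast? = (c :: t2).getLast? :=
          List.getLast?_cons_cons
        rw [h1] at hl1last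
        exact mem_of_getLast?' hl1last
      have := (List.nodup_append.1 hnd).1
      exact (List.nodup_cons.1 this).1 hmemlast
  subst hl1
  rcases l2 with - | ⟨b, t2⟩
  · exfalso
    have : (Sum.inr (Sum.inl r0) : RV n m) = Sum.inl (Fin.last n) := by
      have h1 : ([Sum.inl 0] ++ [Sum.inr (Sum.inl r0)] : List (RV n m)).getLast? =
          some (Sum.inr (Sum.inl r0)) := by simp
      simp only [redGraph] at hlast
      rw [show ([Sum.inl 0] ++ [Sum.inr (Sum.inl r0)] : List (RV n m)) =
        [Sum.inl 0] ++ Sum.inr (Sum.inl r0) :: [] from rfl] at h1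
      rw [h1] at hlast
      exact Option.some_inj.1 hlast
    exact absurd this (by simp)
  · have hb : b = Sum.inl (Fin.last n) := by
      rw [List.isChain_cons_cons] at hch2
      exact from_clause Cl hch2.1
    subst hb
    rcases t2 with - | ⟨c, t3⟩
    · rfl
    · exfalso
      rw [List.isChain_cons_cons] at hch2
      rw [List.isChain_cons_cons] at hch2
      exact no_from_vn Cl hn hch2.2.1

lemma same_var_reach (hn : 1 ≤ n) :
    ∀ (N : ℕ) (p q : Fin m × Fin 3), 3*m - key p ≤ N →
    Relation.TransGen (redE Cl) (Sum.inr (Sum.inr p)) (Sum.inr (Sum.inr q)) →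
    (Cl p.1 p.2).1 = (Cl q.1 q.2).1 → Cl p.1 p.2 = Cl q.1 q.2 := by
  intro N
  induction N with
  | zero => intro p q hN _ _; have := key_lt_3m p; omega
  | succ N ih =>
    intro p q hN htg hvar
    obtain ⟨z, he, hz⟩ := Relation.TransGen.head'_iff.1 htg
    rcases z with b | r' | p'
    · exfalso
      obtain ⟨i, b', hb, hl⟩ := he
      subst hb
      have hvi : (Cl p.1 p.2).1 = i := isOcc_var Cl hl.1
      have hrk : Relation.TransGen (redE Cl) (Sum.inl i.succ) (Sum.inr (Sum.inr q)) := by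
        rcases hz.cases_head with heq | ⟨c, hc, hcz⟩
        · exact absurd heq (by simp)
        · exact Relation.TransGen.head' hc hcz
      have := reach_rk Cl hn hrk
      simp only [rk, Fin.val_succ] at this
      have hkq := key_lt_3m q
      rw [← hvar, hvi] at this
      nlinarith
    · exact absurd he (by simp [redE])
    · obtain ⟨i, b', hno⟩ := he
      have hp : Cl p.1 p.2 = (i, b') := hno.1
      have hp' : Cl p'.1 p'.2 = (i, b') := hno.2.1
      have hkey : key p < key p' := hno.2.2.1
      rcases hz.cases_head with heq | ⟨c, hc, hcz⟩
      · have : p' = q := by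
          injection heq with h1; injection h1
        rw [hp, ← this, hp']
      · have htg' : Relation.TransGen (redE Cl) (Sum.inr (Sum.inr p'))
            (Sum.inr (Sum.inr q)) := Relation.TransGen.head' hc hcz
        have hvar' : (Cl p'.1 p'.2).1 = (Cl q.1 q.2).1 := by
          rw [hp', ← hvar, hp]
        rw [hp, ← ih p' q (by omega) htg' hvar', hp']

lemma key_inj {p q : Fin m × Fin 3} (h : key p = key q) : p = q := by
  have h1 := p.1.2; have h2 := p.2.2; have h3 := q.1.2; have h4 := q.2.2
  simp only [key] at h
  refine Prod.ext (Fin.ext ?_) (Fin.ext ?_) <;> omega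

lemma tail_chain (i : Fin n) (b : Bool) :
    ∀ (N : ℕ) (p : Fin m × Fin 3), 3*m - key p ≤ N → isOcc Cl i b p →
    ∃ l : List (RV n m),
      List.Chain (redE Cl) (Sum.inr (Sum.inr p)) (l ++ [Sum.inl i.succ]) ∧
      (∀ q, isOcc Cl i b q → key p < key q → Sum.inr (Sum.inr q) ∈ l) ∧
      (∀ x ∈ l, ∃ q' : Fin m × Fin 3, x = Sum.inr (Sum.inr q')) := by
  intro N
  induction N with
  | zero => intro p hN hp; have := key_lt_3m p; omega
  | succ N ih =>
    intro p hN hp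
    by_cases hl : ∀ q, isOcc Cl i b q → key q ≤ key p
    · refine ⟨[], ?_, ?_, ?_⟩
      · simp only [List.nil_append]
        exact List.Chain.cons (show redE Cl (Sum.inr (Sum.inr p)) (Sum.inl i.succ)
          from ⟨i, b, rfl, hp, hl⟩) List.Chain.nil
      · intro q hq hk
        exact absurd (hl q hq) (by omega)
      · intro x hx; simp at hx
    · push_neg at hl
      obtain ⟨q, hq, hqk⟩ := hl
      have hne : {k | ∃ q', isOcc Cl i b q' ∧ key p < key q' ∧ key q' = k}.Nonempty :=
        ⟨key q, q, hq, hqk, rfl⟩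
      obtain ⟨q0, hq0occ, hq0gt, hq0eq⟩ := Nat.sInf_mem hne
      have hmin : ∀ r', isOcc Cl i b r' → key r' ≤ key p ∨ key q0 ≤ key r' := by
        intro r' hr'
        by_cases h' : key r' ≤ key p
        · exact Or.inl h'
        · right; rw [hq0eq]; exact Nat.sInf_le ⟨r', hr', by omega, rfl⟩
      obtain ⟨l0, hch, hmem, hshape⟩ := ih q0 (by omega) hq0occ
      refine ⟨Sum.inr (Sum.inr q0) :: l0, ?_, ?_, ?_⟩
      · exact List.Chain.cons (show redE Cl (Sum.inr (Sum.inr p)) (Sum.inr (Sum.inr q0))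
          from ⟨i, b, hp, hq0occ, hq0gt, hmin⟩) hch
      · intro q' hq' hk'
        rcases hmin q' hq' with h' | h'
        · omega
        · rcases eq_or_lt_of_le h' with he | hlt
          · rw [key_inj he]; exact List.mem_cons_self
          · exact List.mem_cons_of_mem _ (hmem q' hq' hlt)
      · intro x hx
        rcases List.mem_cons.1 hx with rfl | hx
        · exact ⟨q0, rfl⟩
        · exact hshape x hx

lemma seg_exists (i : Fin n) (b : Bool) :
    ∃ l : List (RV n m),
      List.Chain (redE Cl) (Sum.inl i.castSucc) (l ++ [Sum.inl i.succ]) ∧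
      (∀ p, isOcc Cl i b p → Sum.inr (Sum.inr p) ∈ l) ∧
      (∀ x ∈ l, ∃ q : Fin m × Fin 3, x = Sum.inr (Sum.inr q)) := by
  by_cases hocc : ∃ p, isOcc Cl i b p
  · obtain ⟨p, hp⟩ := hocc
    have hne : {k | ∃ q', isOcc Cl i b q' ∧ key q' = k}.Nonempty := ⟨key p, p, hp, rfl⟩
    obtain ⟨q0, hq0occ, hq0eq⟩ := Nat.sInf_mem hne
    have hfirst : ∀ q, isOcc Cl i b q → key q0 ≤ key q := by
      intro q hq; rw [hq0eq]; exact Nat.sInf_le ⟨q, hq, rfl⟩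
    obtain ⟨l0, hch, hmem, hshape⟩ := tail_chain Cl i b (3*m) q0 (by omega) hq0occ
    refine ⟨Sum.inr (Sum.inr q0) :: l0, ?_, ?_, ?_⟩
    · exact List.Chain.cons (show redE Cl (Sum.inl i.castSucc) (Sum.inr (Sum.inr q0))
        from ⟨i, b, rfl, hq0occ, hfirst⟩) hch
    · intro q hq
      rcases eq_or_lt_of_le (hfirst q hq) with he | hlt
      · rw [key_inj he]; exact List.mem_cons_self
      · exact List.mem_cons_of_mem _ (hmem q hq hlt)
    · intro x hx
      rcases List.mem_cons.1 hx with rfl | hx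
      · exact ⟨q0, rfl⟩
      · exact hshape x hx
  · have hno : noOcc Cl i b := fun p hp => hocc ⟨p, hp⟩
    refine ⟨[], ?_, ?_, ?_⟩
    · simp only [List.nil_append]
      refine List.Chain.cons (show redE Cl (Sum.inl i.castSucc) (Sum.inl i.succ)
        from ⟨i, rfl, rfl, ?_⟩) List.Chain.nil
      cases b
      · exact Or.inr hno
      · exact Or.inl hno
    · intro p hp; exact absurd hp (hno p)
    · intro x hx; simp at hx

lemma chain_glue {α : Type*} {r : α → α → Prop} {c : α} :
    ∀ (l1 : List α) (a : α) (l2 : List α), List.Chain r a (l1 ++ [c]) →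
    List.Chain r c l2 → List.Chain r a (l1 ++ c :: l2) := by
  intro l1
  induction l1 with
  | nil =>
    intro a l2 h1 h2
    simp only [List.nil_append] at h1 ⊢
    rcases List.chain_cons.1 h1 with ⟨hac, -⟩
    exact List.Chain.cons hac h2
  | cons x t ih =>
    intro a l2 h1 h2
    simp only [List.cons_append] at h1 ⊢
    rcases List.chain_cons.1 h1 with ⟨hax, h1'⟩
    exact List.Chain.cons hax (ih x l2 h1' h2)

lemma path_aux (a : Fin n → Bool) :
    ∀ (N k : ℕ) (hk : k ≤ n), n - k ≤ N →
    ∃ l : List (RV n m),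
      List.Chain (redE Cl) (Sum.inl ⟨k, by omega⟩) l ∧
      ((Sum.inl (⟨k, by omega⟩ : Fin (n+1)) :: l).getLast? = some (Sum.inl (Fin.last n))) ∧
      (∀ (i : Fin n) p, k ≤ (i : ℕ) → isOcc Cl i (a i) p → Sum.inr (Sum.inr p) ∈ l) ∧
      (∀ x ∈ l, (∃ j : Fin (n+1), x = Sum.inl j) ∨
        (∃ q : Fin m × Fin 3, x = Sum.inr (Sum.inr q))) ∧
      (∀ j : Fin (n+1), k ≤ (j : ℕ) →
        Sum.inl j ∈ (Sum.inl (⟨k, by omega⟩ : Fin (n+1)) :: l)) := by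
  intro N
  induction N with
  | zero =>
    intro k hk hN
    have hkn : k = n := by omega
    subst hkn
    refine ⟨[], List.Chain.nil, ?_, ?_, ?_, ?_⟩
    · simp only [List.getLast?_singleton, Option.some_inj]
      rfl
    · intro i p hki _
      have := i.2; omega
    · intro x hx; simp at hx
    · intro j hj
      have : j = ⟨k, by omega⟩ := Fin.ext (by have := j.2; simp; omega)
      rw [this]
      exact List.mem_cons_self
  | succ N ih =>
    intro k hk hN
    by_cases hkn : k < n
    · set i : Fin n := ⟨k, hkn⟩ with hi
      have hival : (i : ℕ) = k := rfl
      obtain ⟨lseg, hsch, hsmem, hsshape⟩ := seg_exists Cl i (a i)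
      obtain ⟨lrest, hrch, hrlast, hrmem, hrshape, hrbb⟩ := ih (k+1) (by omega) (by omega)
      have hsucc : (Sum.inl (⟨k+1, by omega⟩ : Fin (n+1)) : RV n m) = Sum.inl i.succ :=
        congrArg _ (Fin.ext (by simp [Fin.val_succ, hival]))
      have hcast : (Sum.inl (⟨k, by omega⟩ : Fin (n+1)) : RV n m) = Sum.inl i.castSucc :=
        congrArg _ (Fin.ext (by simp [hival]))
      rw [hsucc] at hrch hrlast hrbb
      refine ⟨lseg ++ Sum.inl i.succ :: lrest, ?_, ?_, ?_, ?_, ?_⟩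
      · rw [hcast]
        exact chain_glue lseg _ lrest hsch hrch
      · rw [show (Sum.inl (⟨k, by omega⟩ : Fin (n+1)) :: (lseg ++ Sum.inl i.succ :: lrest) :
            List (RV n m)) =
          (Sum.inl (⟨k, by omega⟩ : Fin (n+1)) :: lseg) ++ (Sum.inl i.succ :: lrest) by simp]
        rw [List.getLast?_append]
        rw [hrlast]
        rfl
      · intro i' p hki' hp
        rcases eq_or_lt_of_le hki' with he | hlt
        · have : i' = i := Fin.ext (by omega)
          subst this
          exact List.mem_append_left _ (hsmem p hp)
        · exact List.mem_append_right _ (List.mem_cons_of_mem _ (hrmem i' p (by omega) hp))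
      · intro x hx
        rcases List.mem_append.1 hx with hx | hx
        · exact Or.inr (hsshape x hx)
        · rcases List.mem_cons.1 hx with rfl | hx
          · exact Or.inl ⟨i.succ, rfl⟩
          · exact hrshape x hx
      · intro j hj
        rcases eq_or_lt_of_le hj with he | hlt
        · have : j = ⟨k, by omega⟩ := Fin.ext (by omega)
          rw [this]
          exact List.mem_cons_self
        · have := hrbb j (by omega)
          rcases List.mem_cons.1 this with he | hmem
          · rw [he]
            exact List.mem_cons_of_mem _ (List.mem_append_right _ (List.mem_cons_self))
          · exact List.mem_cons_of_mem _ (List.mem_append_right _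
              (List.mem_cons_of_mem _ hmem))
    · have hkn' : k = n := by omega
      subst hkn'
      refine ⟨[], List.Chain.nil, ?_, ?_, ?_, ?_⟩
      · simp only [List.getLast?_singleton, Option.some_inj]
        rfl
      · intro i p hki _
        have := i.2; omega
      · intro x hx; simp at hx
      · intro j hj
        have : j = ⟨k, by omega⟩ := Fin.ext (by have := j.2; simp; omega)
        rw [this]
        exact List.mem_cons_self

lemma path_exists (a : Fin n → Bool) :
    ∃ π : List (RV n m), IsCompletePath (redGraph Cl) π ∧
      (∀ (i : Fin n) p, isOcc Cl i (a i) p → Sum.inr (Sum.inr p) ∈ π) ∧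
      (∀ x ∈ π, (∃ j : Fin (n+1), x = Sum.inl j) ∨
        (∃ q : Fin m × Fin 3, x = Sum.inr (Sum.inr q))) ∧
      (∀ j : Fin (n+1), Sum.inl j ∈ π) := by
  obtain ⟨l, hch, hlast, hmem, hshape, hbb⟩ := path_aux Cl a n 0 (by omega) (by omega)
  have h0 : (⟨0, by omega⟩ : Fin (n+1)) = 0 := Fin.ext (by simp)
  rw [h0] at hch hlast hbb
  refine ⟨Sum.inl 0 :: l, ⟨⟨List.cons_ne_nil _ _, hch⟩, rfl, hlast⟩, ?_, ?_, ?_⟩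
  · intro i p hp
    exact List.mem_cons_of_mem _ (hmem i p (by omega) hp)
  · intro x hx
    rcases List.mem_cons.1 hx with rfl | hx
    · exact Or.inl ⟨0, rfl⟩
    · exact hshape x hx
  · intro j
    exact hbb j (by omega)

lemma len_eq_toFinset {π : List (RV n m)} (hnd : π.Nodup) :
    len (redGraph Cl) π = ∑ v ∈ π.toFinset, redc n m v := by
  classical
  exact (List.sum_toFinset _ hnd).symm

lemma sum_backbone : ∑ v ∈ Finset.univ.image (Sum.inl : Fin (n+1) → RV n m),
    redc n m v = (n+1 : ℝ) := by
  rw [Finset.sum_image (by intro x _ y _ h; exact Sum.inl.inj h)]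
  simp only [redc]
  rw [Finset.sum_const, Finset.card_univ, Fintype.card_fin]
  simp [nsmul_eq_mul]

lemma sum_lits : ∑ v ∈ Finset.univ.image
    (fun p : Fin m × Fin 3 => (Sum.inr (Sum.inr p) : RV n m)), redc n m v
    = 3*(m:ℝ)/((m:ℝ)*n+1) := by
  rw [Finset.sum_image (by intro x _ y _ h; exact Sum.inr.inj h |> Sum.inr.inj)]
  simp only [redc]
  rw [Finset.sum_const, Finset.card_univ]
  have : Fintype.card (Fin m × Fin 3) = m * 3 := by simp
  rw [this]
  simp only [nsmul_eq_mul]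
  push_cast
  ring

lemma len_le_noclause (hn : 1 ≤ n) {π : List (RV n m)} (hch : π.Chain' (redE Cl))
    (hno : ∀ r', Sum.inr (Sum.inl r') ∉ π) :
    len (redGraph Cl) π ≤ (n+1 : ℝ) + 3*(m:ℝ)/((m:ℝ)*n+1) := by
  classical
  have hnd := chain_nodup Cl hn hch
  rw [len_eq_toFinset Cl hnd]
  set A : Finset (RV n m) := Finset.univ.image (Sum.inl : Fin (n+1) → RV n m) with hA
  set B : Finset (RV n m) :=
    Finset.univ.image (fun p : Fin m × Fin 3 => Sum.inr (Sum.inr p)) with hB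
  have hsub : π.toFinset ⊆ A ∪ B := by
    intro x hx
    rw [List.mem_toFinset] at hx
    rcases x with j | r | p
    · exact Finset.mem_union_left _ (Finset.mem_image.2 ⟨j, Finset.mem_univ _, rfl⟩)
    · exact absurd hx (hno r)
    · exact Finset.mem_union_right _ (Finset.mem_image.2 ⟨p, Finset.mem_univ _, rfl⟩)
  have h1 : ∑ v ∈ π.toFinset, redc n m v ≤ ∑ v ∈ A ∪ B, redc n m v :=
    Finset.sum_le_sum_of_subset_of_nonneg hsub (fun i _ _ => redc_nonneg i)
  have hdisj : Disjoint A B := by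
    rw [Finset.disjoint_left]
    intro x hxA hxB
    obtain ⟨j, -, rfl⟩ := Finset.mem_image.1 hxA
    obtain ⟨p, -, hp⟩ := Finset.mem_image.1 hxB
    simp at hp
  rw [Finset.sum_union hdisj, sum_backbone, sum_lits] at h1
  exact h1

lemma len_gt (hn : 1 ≤ n) {π : List (RV n m)} (hch : π.Chain' (redE Cl))
    (hbb : ∀ j : Fin (n+1), Sum.inl j ∈ π) {p0 : Fin m × Fin 3}
    (hp0 : Sum.inr (Sum.inr p0) ∈ π) :
    (n+1 : ℝ) < len (redGraph Cl) π := by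
  classical
  have hnd := chain_nodup Cl hn hch
  rw [len_eq_toFinset Cl hnd]
  set A : Finset (RV n m) := Finset.univ.image (Sum.inl : Fin (n+1) → RV n m) with hA
  have hsub : insert (Sum.inr (Sum.inr p0)) A ⊆ π.toFinset := by
    intro x hx
    rcases Finset.mem_insert.1 hx with rfl | hx
    · exact List.mem_toFinset.2 hp0
    · obtain ⟨j, -, rfl⟩ := Finset.mem_image.1 hx
      exact List.mem_toFinset.2 (hbb j)
  have h1 : ∑ v ∈ insert (Sum.inr (Sum.inr p0)) A, redc n m v ≤
      ∑ v ∈ π.toFinset, redc n m v :=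
    Finset.sum_le_sum_of_subset_of_nonneg hsub (fun i _ _ => redc_nonneg i)
  have hnotmem : (Sum.inr (Sum.inr p0) : RV n m) ∉ A := by
    intro hx
    obtain ⟨j, -, hj⟩ := Finset.mem_image.1 hx
    simp at hj
  rw [Finset.sum_insert hnotmem, sum_backbone] at h1
  have hpos : (0:ℝ) < redc n m (Sum.inr (Sum.inr p0)) := by
    simp only [redc]; positivity
  linarith

lemma Rtilde_one (π : List (RV n m)) :
    Rtilde (redGraph Cl) (fun _ => 1) π =
      len (redGraph Cl) π + ∑ s : Fin (m+1), ∑ᶠ v ∈ ivs (redGraph Cl) π s, redc n m v := by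
  simp only [Rtilde, Nat.cast_one, div_one]
  rfl

lemma Rtilde_bddAbove (hn : 1 ≤ n) :
    BddAbove {x : ℝ | ∃ π : List (RV n m), IsCompletePath (redGraph Cl) π ∧
      x = Rtilde (redGraph Cl) (fun _ => 1) π} := by
  classical
  set W : ℝ := ∑ v : RV n m, redc n m v with hW
  refine ⟨W + (m+1) * W, ?_⟩
  rintro x ⟨π, ⟨⟨hne, hch⟩, -, -⟩, rfl⟩
  rw [Rtilde_one]
  have hlen : len (redGraph Cl) π ≤ W := by
    rw [len_eq_toFinset Cl (chain_nodup Cl hn hch)]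
    exact Finset.sum_le_sum_of_subset_of_nonneg (Finset.subset_univ _)
      (fun i _ _ => redc_nonneg i)
  have hterm : ∀ s : Fin (m+1), (∑ᶠ v ∈ ivs (redGraph Cl) π s, redc n m v) ≤ W := by
    intro s
    have h1 := finsum_mem_le_of_subset (Set.subset_univ (ivs (redGraph Cl) π s))
      (redc n m) redc_nonneg
    refine h1.trans (le_of_eq ?_)
    rw [finsum_mem_univ, finsum_eq_sum_of_fintype, hW]
  have hsum : ∑ s : Fin (m+1), (∑ᶠ v ∈ ivs (redGraph Cl) π s, redc n m v) ≤ (m+1) * W := by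
    calc ∑ s : Fin (m+1), (∑ᶠ v ∈ ivs (redGraph Cl) π s, redc n m v)
        ≤ ∑ _s : Fin (m+1), W := Finset.sum_le_sum (fun s _ => hterm s)
      _ = (m+1) * W := by
          rw [Finset.sum_const, Finset.card_univ, Fintype.card_fin, nsmul_eq_mul]
          push_cast; ring
  linarith

lemma three_div_lt (hm : 1 ≤ m) (hn3 : 3 ≤ n) : 3*(m:ℝ)/((m:ℝ)*n+1) < 1 := by
  have h1 : (0:ℝ) < (m:ℝ)*n+1 := by positivity
  rw [div_lt_one h1]
  have hm' : (1:ℝ) ≤ m := by exact_mod_cast hm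
  have hn' : (3:ℝ) ≤ n := by exact_mod_cast hn3
  nlinarith

lemma finsum_lits_le (r0 : Fin m) {S : Set (RV n m)}
    (hS : S ⊆ Set.range (fun j : Fin 3 => (Sum.inr (Sum.inr (r0, j)) : RV n m))) :
    (∑ᶠ v ∈ S, redc n m v) ≤ 3*(1/((m:ℝ)*n+1)) := by
  classical
  have h1 := finsum_mem_le_of_subset hS (redc n m) redc_nonneg
  have h2 : Set.range (fun j : Fin 3 => (Sum.inr (Sum.inr (r0, j)) : RV n m)) =
      ↑(Finset.univ.image (fun j : Fin 3 => (Sum.inr (Sum.inr (r0, j)) : RV n m))) := by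
    rw [Finset.coe_image, Finset.coe_univ, Set.image_univ]
  rw [h2, finsum_mem_coe_finset] at h1
  refine h1.trans (le_of_eq ?_)
  rw [Finset.sum_image (by intro x _ y _ h; simpa using h)]
  simp only [redc]
  rw [Finset.sum_const, Finset.card_univ, Fintype.card_fin, nsmul_eq_mul]
  push_cast
  ring

end Reduction

/-- with one core of every type, the 3-SAT instance is satisfiable
iff `max_π R̃(π) > m + n + 1` on the reduction graph. -/
theorem stmt12 (n m : ℕ) (hm : 1 ≤ m)
    (Cl : Fin m → Fin 3 → Fin n × Bool)
    (hdist : ∀ (r : Fin m) (j j' : Fin 3), j ≠ j' → (Cl r j).1 ≠ (Cl r j').1) :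
    Sat3 n m Cl ↔ ((m : ℝ) + n + 1 < newB2 (redGraph Cl) (fun _ => 1)) := by
  classical
  have hn3 : 3 ≤ n := three_le_n Cl hm hdist
  have hn : 1 ≤ n := by omega
  have hmn1 : (0:ℝ) < (m:ℝ)*n+1 := by positivity
  have hmR : (1:ℝ) ≤ (m:ℝ) := by exact_mod_cast hm
  have hnR : (3:ℝ) ≤ (n:ℝ) := by exact_mod_cast hn3
  constructor
  · rintro ⟨a, ha⟩
    obtain ⟨π, hcomp, hocc, hshape, hbb⟩ := path_exists Cl a
    obtain ⟨⟨hne, hch⟩, hhd, hlast⟩ := hcomp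
    have hch' : π.Chain' (redE Cl) := hch
    have hno : ∀ r', Sum.inr (Sum.inl r') ∉ π := by
      intro r' hr'
      rcases hshape _ hr' with ⟨j, h⟩ | ⟨q, h⟩ <;> simp at h
    have hivs : ∀ r : Fin m, ivs (redGraph Cl) π (Fin.succ r) = {Sum.inr (Sum.inl r)} := by
      intro r
      refine Set.Subset.antisymm (ivs_succ_sub Cl hn hdist hno r) ?_
      obtain ⟨j, hj⟩ := ha r
      have hp : isOcc Cl (Cl r j).1 (a (Cl r j).1) (r, j) := Prod.ext rfl hj
      have hmem := hocc _ _ hp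
      exact Set.singleton_subset_iff.2 (ivs_succ_mem Cl hn hmem)
    have hR : Rtilde (redGraph Cl) (fun _ => 1) π = len (redGraph Cl) π + (m:ℝ) := by
      rw [Rtilde_one]
      congr 1
      rw [Fin.sum_univ_succ, ivs_zero Cl hn π, finsum_mem_empty]
      have hone : ∀ r : Fin m,
          (∑ᶠ v ∈ ivs (redGraph Cl) π (Fin.succ r), redc n m v) = 1 := by
        intro r
        rw [hivs r, finsum_mem_singleton]
        rfl
      rw [Finset.sum_congr rfl (fun r _ => hone r)]
      rw [Finset.sum_const, Finset.card_univ, Fintype.card_fin, nsmul_eq_mul, mul_one]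
      ring
    obtain ⟨j0, hj0⟩ := ha ⟨0, hm⟩
    have hp0 : isOcc Cl (Cl ⟨0, hm⟩ j0).1 (a (Cl ⟨0, hm⟩ j0).1) (⟨0, hm⟩, j0) :=
      Prod.ext rfl hj0
    have hmem0 := hocc _ _ hp0
    have hlen := len_gt Cl hn hch' hbb hmem0
    have hmemS : Rtilde (redGraph Cl) (fun _ => 1) π ∈
        {x : ℝ | ∃ π' : List (RV n m), IsCompletePath (redGraph Cl) π' ∧
          x = Rtilde (redGraph Cl) (fun _ => 1) π'} := ⟨π, ⟨⟨hne, hch⟩, hhd, hlast⟩, rfl⟩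
    have hle := le_csSup (Rtilde_bddAbove Cl hn) hmemS
    rw [newB2]
    have hgt : (m:ℝ) + n + 1 < Rtilde (redGraph Cl) (fun _ => 1) π := by
      rw [hR]; linarith
    linarith
  · intro hlt
    rw [newB2] at hlt
    have hSne : {x : ℝ | ∃ π : List (RV n m), IsCompletePath (redGraph Cl) π ∧
        x = Rtilde (redGraph Cl) (fun _ => 1) π}.Nonempty := by
      by_contra hno
      rw [Set.not_nonempty_iff_eq_empty] at hno
      rw [hno, Real.sSup_empty] at hlt
      linarith
    obtain ⟨x, hxS, hx⟩ := exists_lt_of_lt_csSup hSne hlt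
    obtain ⟨π, hcomp, rfl⟩ := hxS
    rcases Classical.em (∃ r0 : Fin m, Sum.inr (Sum.inl r0) ∈ π) with hclv | hclv
    · exfalso
      obtain ⟨r0, hr0⟩ := hclv
      have hπ := clause_path Cl hn hcomp hr0
      rw [hπ, Rtilde_one] at hx
      set T : List (RV n m) := [Sum.inl 0, Sum.inr (Sum.inl r0), Sum.inl (Fin.last n)]
        with hT
      have hlen3 : len (redGraph Cl) T = 3 := by
        simp [hT, len, redGraph, redc]
        norm_num
      have hsub : ∀ r : Fin m, ivs (redGraph Cl) T (Fin.succ r) ⊆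
          Set.range (fun j : Fin 3 => (Sum.inr (Sum.inr (r0, j)) : RV n m)) := by
        intro r x hxm
        obtain ⟨τ, ⟨hτπ, hτγ⟩, hxp⟩ := Set.mem_iUnion₂.1 hxm
        have hτ3 : τ = Sum.inl 0 ∨ τ = Sum.inr (Sum.inl r0) ∨ τ = Sum.inl (Fin.last n) := by
          simpa [hT] using hτπ
        rcases hτ3 with rfl | rfl | rfl
        · exact absurd hτγ (Fin.succ_ne_zero r).symm
        · exact clause_par_sub Cl r0 hxp
        · exact absurd hτγ (Fin.succ_ne_zero r).symm
      have hsucc : ∀ r : Fin m,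
          (∑ᶠ v ∈ ivs (redGraph Cl) T (Fin.succ r), redc n m v) ≤ 3*(1/((m:ℝ)*n+1)) :=
        fun r => finsum_lits_le r0 (hsub r)
      have hsumb : ∑ s : Fin (m+1), (∑ᶠ v ∈ ivs (redGraph Cl) T s, redc n m v) ≤
          (m:ℝ) * (3*(1/((m:ℝ)*n+1))) := by
        rw [Fin.sum_univ_succ, ivs_zero Cl hn, finsum_mem_empty, zero_add]
        calc ∑ r : Fin m, (∑ᶠ v ∈ ivs (redGraph Cl) T (Fin.succ r), redc n m v)
            ≤ ∑ _r : Fin m, 3*(1/((m:ℝ)*n+1)) := Finset.sum_le_sum (fun r _ => hsucc r)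
          _ = (m:ℝ) * (3*(1/((m:ℝ)*n+1))) := by
              rw [Finset.sum_const, Finset.card_univ, Fintype.card_fin, nsmul_eq_mul]
      have hfrac : (m:ℝ) * (3*(1/((m:ℝ)*n+1))) ≤ 1 := by
        have he : (m:ℝ) * (3*(1/((m:ℝ)*n+1))) = 3*(m:ℝ)/((m:ℝ)*n+1) := by ring
        rw [he, div_le_one hmn1]
        nlinarith
      rw [hlen3] at hx
      linarith
    · have hclv' : ∀ r', Sum.inr (Sum.inl r') ∉ π := by push_neg at hclv; exact hclv
      clear hclv
      rename' hclv' => hclv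
      obtain ⟨⟨hne, hch⟩, hhd, hlast⟩ := hcomp
      rw [Rtilde_one] at hx
      have hlen := len_le_noclause Cl hn hch hclv
      have hd1 := three_div_lt hm hn3
      set w : Fin m → ℝ :=
        fun r => ∑ᶠ v ∈ ivs (redGraph Cl) π (Fin.succ r), redc n m v with hw
      have hsum : ∑ s : Fin (m+1), (∑ᶠ v ∈ ivs (redGraph Cl) π s, redc n m v) =
          ∑ r : Fin m, w r := by
        rw [Fin.sum_univ_succ, ivs_zero Cl hn π, finsum_mem_empty, zero_add]
      rw [hsum] at hx
      have hwle : ∀ r, w r ≤ 1 := by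
        intro r
        have h1 := finsum_mem_le_of_subset (ivs_succ_sub Cl hn hdist hclv r)
          (redc n m) redc_nonneg
        rw [finsum_mem_singleton] at h1
        exact h1
      have hit : ∀ r : Fin m, ∃ p : Fin m × Fin 3, p.1 = r ∧ Sum.inr (Sum.inr p) ∈ π := by
        by_contra hcon
        push_neg at hcon
        obtain ⟨rs, hrs⟩ := hcon
        have hempty : ivs (redGraph Cl) π (Fin.succ rs) = ∅ := by
          apply Set.eq_empty_iff_forall_notMem.2
          intro x hxm
          obtain ⟨τ, ⟨hτπ, hτγ⟩, -⟩ := Set.mem_iUnion₂.1 hxm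
          rcases τ with j | r' | p
          · exact (Fin.succ_ne_zero rs) hτγ.symm
          · exact hclv r' hτπ
          · exact hrs p (Fin.succ_inj.1 hτγ) hτπ
        have hw0 : w rs = 0 := by
          simp only [hw]
          rw [hempty, finsum_mem_empty]
        have hsplit := Finset.sum_erase_add Finset.univ w (Finset.mem_univ rs)
        have herase : ∑ r ∈ Finset.univ.erase rs, w r ≤ (m:ℝ) - 1 := by
          calc ∑ r ∈ Finset.univ.erase rs, w r ≤ ∑ _r ∈ Finset.univ.erase rs, (1:ℝ) :=
              Finset.sum_le_sum (fun r _ => hwle r)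
            _ = (((Finset.univ.erase rs).card : ℕ) : ℝ) := by
                rw [Finset.sum_const, nsmul_eq_mul, mul_one]
            _ = (m:ℝ) - 1 := by
                rw [Finset.card_erase_of_mem (Finset.mem_univ _), Finset.card_univ,
                  Fintype.card_fin]
                push_cast [hm]
                ring
        have hlt2 : ∑ r : Fin m, w r ≤ (m:ℝ) - 1 := by
          rw [← hsplit, hw0, add_zero]
          exact herase
        linarith
      have hpw := chain_pairwise Cl hn hch
      have hpw2 : π.Pairwise (fun a b => Relation.TransGen (redE Cl) a b ∨
          Relation.TransGen (redE Cl) b a) := hpw.imp (fun h => Or.inl h)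
      have hsym : Symmetric (fun a b : RV n m => Relation.TransGen (redE Cl) a b ∨
          Relation.TransGen (redE Cl) b a) := fun x y hxy => hxy.symm
      haveI : Std.Symm (fun a b : RV n m => Relation.TransGen (redE Cl) a b ∨
          Relation.TransGen (redE Cl) b a) := ⟨fun _ _ h => hsym h⟩
      have hcomp2 := List.Pairwise.forall hpw2
      have hcons : ∀ p q : Fin m × Fin 3, Sum.inr (Sum.inr p) ∈ π →
          Sum.inr (Sum.inr q) ∈ π → (Cl p.1 p.2).1 = (Cl q.1 q.2).1 →
          (Cl p.1 p.2).2 = (Cl q.1 q.2).2 := by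
        intro p q hp hq hv
        by_cases hpq : p = q
        · rw [hpq]
        · have hne' : (Sum.inr (Sum.inr p) : RV n m) ≠ Sum.inr (Sum.inr q) := by
            simp [hpq]
          rcases hcomp2 hp hq hne' with h | h
          · exact congrArg Prod.snd (same_var_reach Cl hn (3*m) p q (by omega) h hv)
          · exact (congrArg Prod.snd
              (same_var_reach Cl hn (3*m) q p (by omega) h hv.symm)).symm
      haveI : DecidablePred (fun i : Fin n => ∃ p : Fin m × Fin 3,
          Sum.inr (Sum.inr p) ∈ π ∧ (Cl p.1 p.2).1 = i ∧ (Cl p.1 p.2).2 = true) :=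
        fun _ => Classical.propDecidable _
      refine ⟨fun i => if _h : ∃ p : Fin m × Fin 3, Sum.inr (Sum.inr p) ∈ π ∧
        (Cl p.1 p.2).1 = i ∧ (Cl p.1 p.2).2 = true then true else false, ?_⟩
      intro r
      obtain ⟨p, hp1, hpmem⟩ := hit r
      refine ⟨p.2, ?_⟩
      have hcl_eq : Cl r p.2 = Cl p.1 p.2 := by rw [hp1]
      rw [hcl_eq]
      by_cases hb : (Cl p.1 p.2).2 = true
      · rw [hb]
        beta_reduce
        rw [dif_pos ⟨p, hpmem, rfl, hb⟩]
      · have hb' : (Cl p.1 p.2).2 = false := by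
          cases h' : (Cl p.1 p.2).2
          · rfl
          · exact absurd h' hb
        rw [hb']
        have hneg : ¬ ∃ q : Fin m × Fin 3, Sum.inr (Sum.inr q) ∈ π ∧
            (Cl q.1 q.2).1 = (Cl p.1 p.2).1 ∧ (Cl q.1 q.2).2 = true := by
          rintro ⟨q, hqmem, hqv, hqt⟩
          have := hcons p q hpmem hqmem hqv.symm
          rw [hb', hqt] at this
          simp at this
        beta_reduce
        rw [dif_neg hneg]

end TypedSched
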